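/- Let H : ℝ → ℝ be C² with H''(P₀) = 2a > 0 at an interior minimum P₀ of [α,β] where H(P₀) = 0 and H > 0 on [α,β]\{P₀}. Then the Laplace asymptotics hold: ν^{-1} ∫_α^β exp(-H(p)/ν²) dp converges to √(π/a) = √(2π/H''(P₀)) as ν → 0⁺. -/

import Mathlib

open MeasureTheory Set intervalIntegral Filter Topology

lemma quad_upper_aux {H : ℝ → ℝ} {P₀ δ c : ℝ}
    (hH : ContDiff ℝ 2 H) (h0 : H P₀ = 0) (h1 : deriv H P₀ = 0)
    (hc : ∀ x ∈ Icc (P₀ - δ) (P₀ + δ), deriv (deriv H) x ≤ c) :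
    ∀ p ∈ Icc (P₀ - δ) (P₀ + δ), H p ≤ c / 2 * (p - P₀) ^ 2 := by
  intro p hp
  have hδ : 0 ≤ δ := by
    have := hp.1.trans hp.2; linarith
  have hd1 : Differentiable ℝ H := hH.differentiable two_ne_zero
  have hder : ContDiff ℝ 1 (deriv H) := (contDiff_succ_iff_deriv.mp (by exact_mod_cast hH)).2.2
  have hd2 : Differentiable ℝ (deriv H) := hder.differentiable one_ne_zero
  set G1 : ℝ → ℝ := fun x => c * (x - P₀) - deriv H x with hG1def
  set G : ℝ → ℝ := fun x => c / 2 * (x - P₀) ^ 2 - H x with hGdef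
  have hG1d : ∀ x, HasDerivAt G1 (c - deriv (deriv H) x) x := by
    intro x
    have h1' : HasDerivAt (fun x => c * (x - P₀)) c x := by
      have h := ((hasDerivAt_id' (x := x)).sub_const P₀).const_mul c
      simpa only [mul_one] using h
    exact h1'.sub (hd2 x).hasDerivAt
  have hGd : ∀ x, HasDerivAt G (G1 x) x := by
    intro x
    have h1' : HasDerivAt (fun x => c / 2 * (x - P₀) ^ 2) (c * (x - P₀)) x := by
      have h := (((hasDerivAt_id' (x := x)).sub_const P₀).fun_pow 2).const_mul (c / 2)
      refine h.congr_deriv ?_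
      push_cast
      ring
    exact h1'.sub (hd1 x).hasDerivAt
  have hG1diff : Differentiable ℝ G1 := fun x => (hG1d x).differentiableAt
  have hGdiff : Differentiable ℝ G := fun x => (hGd x).differentiableAt
  have hG1mono : MonotoneOn G1 (Icc (P₀ - δ) (P₀ + δ)) := by
    apply monotoneOn_of_deriv_nonneg (convex_Icc _ _)
    · exact hG1diff.continuous.continuousOn
    · exact fun x _ => ((hG1d x).differentiableAt).differentiableWithinAt
    · intro x hx
      rw [interior_Icc] at hx
      rw [(hG1d x).deriv]
      have := hc x (Ioo_subset_Icc_self hx)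
      linarith
  have hG1P₀ : G1 P₀ = 0 := by simp [hG1def, h1]
  have hGP₀ : G P₀ = 0 := by simp [hGdef, h0]
  have hPmem : P₀ ∈ Icc (P₀ - δ) (P₀ + δ) := by constructor <;> linarith
  have key : 0 ≤ G p := by
    rcases le_total P₀ p with hle | hle
    · have hmono : MonotoneOn G (Icc P₀ (P₀ + δ)) := by
        apply monotoneOn_of_deriv_nonneg (convex_Icc _ _)
        · exact hGdiff.continuous.continuousOn
        · exact fun x _ => ((hGd x).differentiableAt).differentiableWithinAt
        · intro x hx
          rw [interior_Icc] at hx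
          rw [(hGd x).deriv]
          rw [← hG1P₀]
          exact hG1mono hPmem ⟨by linarith [hx.1], by linarith [hx.2]⟩ hx.1.le
      have := hmono ⟨le_rfl, by linarith⟩ ⟨hle, hp.2⟩ hle
      linarith [hGP₀]
    · have hanti : AntitoneOn G (Icc (P₀ - δ) P₀) := by
        apply antitoneOn_of_deriv_nonpos (convex_Icc _ _)
        · exact hGdiff.continuous.continuousOn
        · exact fun x _ => ((hGd x).differentiableAt).differentiableWithinAt
        · intro x hx
          rw [interior_Icc] at hx
          rw [(hGd x).deriv]
          rw [← hG1P₀]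
          exact hG1mono ⟨by linarith [hx.1], by linarith [hx.2]⟩ hPmem hx.2.le
      have := hanti ⟨hp.1, hle⟩ ⟨by linarith, le_rfl⟩ hle
      linarith [hGP₀]
  simp only [hGdef] at key
  linarith

lemma quad_lower_aux {H : ℝ → ℝ} {P₀ δ c : ℝ}
    (hH : ContDiff ℝ 2 H) (h0 : H P₀ = 0) (h1 : deriv H P₀ = 0)
    (hc : ∀ x ∈ Icc (P₀ - δ) (P₀ + δ), c ≤ deriv (deriv H) x) :
    ∀ p ∈ Icc (P₀ - δ) (P₀ + δ), c / 2 * (p - P₀) ^ 2 ≤ H p := by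
  have hneg : ∀ x, deriv (deriv (fun y => -H y)) x = -(deriv (deriv H) x) := by
    intro x
    have : (deriv fun y => -H y) = fun y => -deriv H y := funext fun y => deriv.neg
    rw [this, deriv.fun_neg]
  have h := quad_upper_aux (H := fun y => -H y) (P₀ := P₀) (δ := δ) (c := -c)
    hH.neg (by simp [h0]) (by rw [deriv.fun_neg, h1, neg_zero])
    (fun x hx => by rw [hneg x]; linarith [hc x hx])
  intro p hp
  have := h p hp
  linarith

lemma ratio_tendsto_aux {H : ℝ → ℝ} {P₀ : ℝ}
    (hH : ContDiff ℝ 2 H) (h0 : H P₀ = 0) (h1 : deriv H P₀ = 0) (t : ℝ) :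
    Tendsto (fun ν : ℝ => H (P₀ + ν * t) / ν ^ 2) (𝓝[>] 0)
      (𝓝 (deriv (deriv H) P₀ / 2 * t ^ 2)) := by
  set D := deriv (deriv H) P₀ with hD
  have hder : ContDiff ℝ 1 (deriv H) := (contDiff_succ_iff_deriv.mp (by exact_mod_cast hH)).2.2
  have hcont2 : Continuous (deriv (deriv H)) :=
    (contDiff_one_iff_deriv.mp hder).2
  rw [Metric.tendsto_nhds]
  intro ε hε
  have hε' : 0 < ε / (t ^ 2 + 1) := by positivity
  obtain ⟨δ, hδpos, hδ⟩ := Metric.continuousAt_iff.mp (hcont2.continuousAt (x := P₀)) _ hε'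
  set ε' := ε / (t ^ 2 + 1)
  have hup : ∀ p ∈ Icc (P₀ - δ/2) (P₀ + δ/2), H p ≤ (D + ε') / 2 * (p - P₀) ^ 2 := by
    apply quad_upper_aux hH h0 h1
    intro x hx
    have hd : dist x P₀ < δ := by
      rw [Real.dist_eq]
      rcases hx with ⟨hx1, hx2⟩
      rw [abs_lt]; constructor <;> linarith
    have := hδ hd
    rw [Real.dist_eq, abs_lt] at this
    linarith [this.2]
  have hlo : ∀ p ∈ Icc (P₀ - δ/2) (P₀ + δ/2), (D - ε') / 2 * (p - P₀) ^ 2 ≤ H p := by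
    apply quad_lower_aux hH h0 h1
    intro x hx
    have hd : dist x P₀ < δ := by
      rw [Real.dist_eq]
      rcases hx with ⟨hx1, hx2⟩
      rw [abs_lt]; constructor <;> linarith
    have := hδ hd
    rw [Real.dist_eq, abs_lt] at this
    linarith [this.1]
  have hr : 0 < (δ/2) / (|t| + 1) := by positivity
  filter_upwards [Ioo_mem_nhdsGT_of_mem (Set.left_mem_Ico.mpr hr)] with ν hν
  obtain ⟨hν0, hνr⟩ := hν
  have hmem : P₀ + ν * t ∈ Icc (P₀ - δ/2) (P₀ + δ/2) := by
    have habs : |ν * t| ≤ δ/2 := by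
      rw [abs_mul, abs_of_pos hν0]
      calc ν * |t| ≤ ((δ/2) / (|t| + 1)) * |t| := by
            apply mul_le_mul_of_nonneg_right hνr.le (abs_nonneg t)
        _ ≤ δ/2 := by
            rw [div_mul_eq_mul_div, div_le_iff₀ (by positivity)]
            nlinarith [abs_nonneg t]
    rw [abs_le] at habs
    constructor <;> [linarith [habs.1]; linarith [habs.2]]
  have h1' := hup _ hmem
  have h2' := hlo _ hmem
  have hsq : (P₀ + ν * t - P₀) ^ 2 = ν ^ 2 * t ^ 2 := by ring
  rw [hsq] at h1' h2'
  have hν2 : (0:ℝ) < ν ^ 2 := by positivity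
  rw [Real.dist_eq]
  have hub : H (P₀ + ν * t) / ν ^ 2 ≤ (D + ε') / 2 * t ^ 2 := by
    rw [div_le_iff₀ hν2]; nlinarith
  have hlb : (D - ε') / 2 * t ^ 2 ≤ H (P₀ + ν * t) / ν ^ 2 := by
    rw [le_div_iff₀ hν2]; nlinarith
  have ht2 : ε' / 2 * t ^ 2 < ε := by
    have h0' : (t ^ 2 + 1) ≠ (0:ℝ) := by positivity
    have hu : ε' * (t ^ 2 + 1) = ε := div_mul_cancel₀ ε h0'
    nlinarith [hε', sq_nonneg t]
  rw [abs_lt]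
  constructor <;> nlinarith

set_option maxHeartbeats 1000000 in
theorem stmt_9 (α β P₀ : ℝ) (h1 : α < P₀) (h2 : P₀ < β)
    (H : ℝ → ℝ) (hH : ContDiff ℝ 2 H) (hmin : H P₀ = 0)
    (hpos : ∀ p ∈ Icc α β, p ≠ P₀ → 0 < H p)
    (hH'' : 0 < deriv (deriv H) P₀) :
    Tendsto (fun ν : ℝ => ν⁻¹ * ∫ p in α..β, Real.exp (-H p / ν ^ 2))
      (𝓝[>] 0) (𝓝 (Real.sqrt (2 * Real.pi / deriv (deriv H) P₀))) := by
  have hαβ : α < β := h1.trans h2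
  have hd1 : Differentiable ℝ H := hH.differentiable two_ne_zero
  have hder : ContDiff ℝ 1 (deriv H) := (contDiff_succ_iff_deriv.mp (by exact_mod_cast hH)).2.2
  have hcont2 : Continuous (deriv (deriv H)) := (contDiff_one_iff_deriv.mp hder).2
  set D := deriv (deriv H) P₀ with hDdef
  have hDpos : 0 < D := hH''
  clear_value D
  have hH'0 : deriv H P₀ = 0 := by
    have hloc : IsLocalMin H P₀ := by
      have hmem : Icc α β ∈ 𝓝 P₀ := Icc_mem_nhds h1 h2
      filter_upwards [hmem] with p hp
      by_cases hp' : p = P₀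
      · rw [hp']
      · rw [hmin]; exact (hpos p hp hp').le
    exact hloc.deriv_eq_zero
  -- choose δ₀
  obtain ⟨δ, hδpos, hδ⟩ := Metric.continuousAt_iff.mp (hcont2.continuousAt (x := P₀)) (D/2)
    (half_pos hDpos)
  set δ₀ := min (δ/2) (min ((P₀ - α)/2) ((β - P₀)/2)) with hδ₀def
  have hδ₀pos : 0 < δ₀ := by
    apply lt_min (by positivity) (lt_min (by linarith) (by linarith))
  have hδ₀α : δ₀ < P₀ - α := by
    have : δ₀ ≤ (P₀ - α)/2 := le_trans (min_le_right _ _) (min_le_left _ _)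
    linarith
  have hδ₀β : δ₀ < β - P₀ := by
    have : δ₀ ≤ (β - P₀)/2 := le_trans (min_le_right _ _) (min_le_right _ _)
    linarith
  have hδ₀δ : δ₀ ≤ δ/2 := min_le_left _ _
  clear_value δ₀
  have hlow : ∀ x ∈ Icc (P₀ - δ₀) (P₀ + δ₀), D/2 ≤ deriv (deriv H) x := by
    intro x hx
    have hd : dist x P₀ < δ := by
      rw [Real.dist_eq, abs_lt]
      rcases hx with ⟨hx1, hx2⟩
      constructor <;> linarith
    have := hδ hd
    rw [Real.dist_eq, abs_lt] at this
    linarith [this.1]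
  -- compact minimum away from P₀
  set K := Icc α β \ Ioo (P₀ - δ₀) (P₀ + δ₀) with hKdef
  have hKc : IsCompact K := isCompact_Icc.diff isOpen_Ioo
  have hKne : K.Nonempty := ⟨α, ⟨le_rfl, hαβ.le⟩, fun h => by
    simp only [mem_Ioo] at h; linarith [h.1]⟩
  obtain ⟨x₀, hx₀K, hx₀min'⟩ := hKc.exists_isMinOn hKne hH.continuous.continuousOn
  have hx₀min : ∀ x ∈ K, H x₀ ≤ H x := fun x hx => hx₀min' hx
  set m := H x₀ with hmdef
  have hmpos : 0 < m := by
    apply hpos x₀ hx₀K.1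
    intro h
    exact hx₀K.2 (by rw [h]; exact ⟨by linarith, by linarith⟩)
  clear_value K m
  set c := min (D/4) (m / (β - α)^2) with hcdef
  have hcpos : 0 < c := lt_min (by positivity) (div_pos hmpos (pow_pos (by linarith) 2))
  have hcD : c ≤ D/4 := min_le_left _ _
  have hcm : c ≤ m / (β - α) ^ 2 := min_le_right _ _
  clear_value c
  -- core lower bound for the exponent
  have hcore : ∀ ν : ℝ, 0 < ν → ∀ t : ℝ, t ∈ Ioc ((α - P₀)/ν) ((β - P₀)/ν) →
      c * t ^ 2 ≤ H (P₀ + ν * t) / ν ^ 2 := by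
    intro ν hν t ht
    have htν1 : α - P₀ < t * ν := (div_lt_iff₀ hν).mp ht.1
    have htν2 : t * ν ≤ β - P₀ := (le_div_iff₀ hν).mp ht.2
    have hcomm : t * ν = ν * t := mul_comm t ν
    have hp1 : α < P₀ + ν * t := by linarith
    have hp2 : P₀ + ν * t ≤ β := by linarith
    have hν2 : (0:ℝ) < ν ^ 2 := by positivity
    rcases le_or_gt (|ν * t|) δ₀ with hcase | hcase
    · have hmem : P₀ + ν * t ∈ Icc (P₀ - δ₀) (P₀ + δ₀) := by
        rw [abs_le] at hcase
        exact ⟨by linarith [hcase.1], by linarith [hcase.2]⟩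
      have h := quad_lower_aux hH hmin hH'0 hlow _ hmem
      have hsq : (P₀ + ν * t - P₀) ^ 2 = ν ^ 2 * t ^ 2 := by ring
      rw [hsq] at h
      rw [le_div_iff₀ hν2]
      nlinarith [mul_nonneg (sq_nonneg ν) (sq_nonneg t)]
    · have hK' : P₀ + ν * t ∈ K := by
        rw [hKdef]
        refine ⟨⟨hp1.le, hp2⟩, fun hmem' => ?_⟩
        simp only [mem_Ioo] at hmem'
        have : |ν * t| < δ₀ := abs_lt.mpr ⟨by linarith [hmem'.1], by linarith [hmem'.2]⟩
        linarith
      have hmle : m ≤ H (P₀ + ν * t) := hx₀min _ hK'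
      have habs : |ν * t| ≤ β - α := abs_le.mpr ⟨by linarith, by linarith⟩
      have h2' : ν ^ 2 * t ^ 2 ≤ (β - α) ^ 2 := by
        nlinarith [abs_nonneg (ν * t), sq_abs (ν * t)]
      rw [le_div_iff₀ hν2]
      have hba2 : (0:ℝ) < (β - α) ^ 2 := pow_pos (by linarith) 2
      have hkey : c * t ^ 2 * ν ^ 2 ≤ m := by
        calc c * t ^ 2 * ν ^ 2 ≤ (m / (β - α) ^ 2) * (ν ^ 2 * t ^ 2) := by
              nlinarith [mul_nonneg (sq_nonneg ν) (sq_nonneg t)]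
          _ ≤ (m / (β - α) ^ 2) * (β - α) ^ 2 := by
              apply mul_le_mul_of_nonneg_left h2' (le_of_lt (div_pos hmpos hba2))
          _ = m := div_mul_cancel₀ m (ne_of_gt hba2)
      linarith
  -- the family of functions
  set F : ℝ → ℝ → ℝ := fun ν t =>
    (Ioc ((α - P₀)/ν) ((β - P₀)/ν)).indicator (fun s => Real.exp (-H (P₀ + ν * s) / ν ^ 2)) t
    with hFdef
  clear_value F
  have key : Tendsto (fun ν => ∫ t : ℝ, F ν t) (𝓝[>] (0:ℝ))
      (𝓝 (∫ t : ℝ, Real.exp (-(D/2) * t ^ 2))) := by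
    apply MeasureTheory.tendsto_integral_filter_of_dominated_convergence (fun t => Real.exp (-c * t ^ 2))
    · apply Eventually.of_forall
      intro ν
      rw [hFdef]
      apply AEStronglyMeasurable.indicator _ measurableSet_Ioc
      apply Continuous.aestronglyMeasurable
      apply Real.continuous_exp.comp
      apply Continuous.div_const
      exact (hH.continuous.comp (continuous_const.add (continuous_const.mul continuous_id))).neg
    · filter_upwards [self_mem_nhdsWithin] with ν hν
      apply Eventually.of_forall
      intro t
      have hν : (0:ℝ) < ν := hν
      by_cases ht : t ∈ Ioc ((α - P₀)/ν) ((β - P₀)/ν)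
      · simp only [hFdef, indicator_of_mem ht]
        rw [Real.norm_eq_abs, abs_of_pos (Real.exp_pos _)]
        apply Real.exp_le_exp.mpr
        have := hcore ν hν t ht
        rw [neg_div, neg_mul]
        linarith
      · simp only [hFdef, indicator_of_notMem ht]
        rw [norm_zero]
        exact (Real.exp_pos _).le
    · exact integrable_exp_neg_mul_sq hcpos
    · apply Eventually.of_forall
      intro t
      have hr1 : 0 < (P₀ - α) / (|t| + 1) := div_pos (by linarith) (by positivity)
      have hr2 : 0 < (β - P₀) / (|t| + 1) := div_pos (by linarith) (by positivity)
      set r := min ((P₀ - α) / (|t| + 1)) ((β - P₀) / (|t| + 1)) with hrdef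
      have hrpos : 0 < r := lt_min hr1 hr2
      have hev : ∀ᶠ ν in 𝓝[>] (0:ℝ), F ν t = Real.exp (-H (P₀ + ν * t) / ν ^ 2) := by
        filter_upwards [Ioo_mem_nhdsGT_of_mem (Set.left_mem_Ico.mpr hrpos)] with ν hν
        obtain ⟨hν0, hνr⟩ := hν
        have e1 : ν * (|t| + 1) < P₀ - α := by
          have h' : ν < (P₀ - α) / (|t| + 1) := lt_of_lt_of_le hνr (min_le_left _ _)
          exact (lt_div_iff₀ (by positivity)).mp h'
        have e2 : ν * (|t| + 1) < β - P₀ := by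
          have h' : ν < (β - P₀) / (|t| + 1) := lt_of_lt_of_le hνr (min_le_right _ _)
          exact (lt_div_iff₀ (by positivity)).mp h'
        have e3 : |ν * t| < min (P₀ - α) (β - P₀) := by
          rw [abs_mul, abs_of_pos hν0]
          apply lt_min <;> nlinarith [abs_nonneg t]
        have hmem : t ∈ Ioc ((α - P₀)/ν) ((β - P₀)/ν) := by
          have hlo := neg_lt_of_abs_lt e3
          have hhi := lt_of_abs_lt e3
          have hm1 : min (P₀ - α) (β - P₀) ≤ P₀ - α := min_le_left _ _
          have hm2 : min (P₀ - α) (β - P₀) ≤ β - P₀ := min_le_right _ _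
          have hcomm : t * ν = ν * t := mul_comm t ν
          constructor
          · rw [div_lt_iff₀ hν0]; linarith
          · rw [le_div_iff₀ hν0]; linarith
        simp only [hFdef, indicator_of_mem hmem]
      have hlim : Tendsto (fun ν : ℝ => Real.exp (-H (P₀ + ν * t) / ν ^ 2)) (𝓝[>] (0:ℝ))
          (𝓝 (Real.exp (-(D/2) * t ^ 2))) := by
        have h := (ratio_tendsto_aux hH hmin hH'0 t).neg
        rw [← hDdef] at h
        have h2' : Tendsto (fun ν : ℝ => Real.exp (-(H (P₀ + ν * t) / ν ^ 2))) (𝓝[>] (0:ℝ))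
            (𝓝 (Real.exp (-(D / 2 * t ^ 2)))) :=
          (Real.continuous_exp.continuousAt.tendsto).comp h
        have e1 : (fun ν : ℝ => Real.exp (-(H (P₀ + ν * t) / ν ^ 2)))
            = fun ν : ℝ => Real.exp (-H (P₀ + ν * t) / ν ^ 2) := by
          funext ν; rw [neg_div]
        have e2 : -(D / 2 * t ^ 2) = -(D/2) * t ^ 2 := by ring
        rw [e1, e2] at h2'
        exact h2'
      exact Filter.Tendsto.congr' (hev.mono fun ν h => h.symm) hlim
  have hgauss : (∫ t : ℝ, Real.exp (-(D/2) * t ^ 2)) = Real.sqrt (2 * Real.pi / D) := by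
    rw [integral_gaussian]
    congr 1
    rw [div_div_eq_mul_div, mul_comm]
  rw [hgauss] at key
  have heq : (fun ν : ℝ => ∫ t : ℝ, F ν t)
      =ᶠ[𝓝[>] (0:ℝ)] fun ν : ℝ => ν⁻¹ * ∫ p in α..β, Real.exp (-H p / ν ^ 2) := by
    filter_upwards [self_mem_nhdsWithin] with ν hν
    have hν : (0:ℝ) < ν := hν
    have hab : (α - P₀)/ν ≤ (β - P₀)/ν :=
      (div_le_div_iff_of_pos_right hν).mpr (by linarith)
    rw [hFdef]
    rw [MeasureTheory.integral_indicator measurableSet_Ioc]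
    rw [← intervalIntegral.integral_of_le hab]
    have e1 : ν * ((α - P₀)/ν) + P₀ = α := by field_simp; ring
    have e2 : ν * ((β - P₀)/ν) + P₀ = β := by field_simp; ring
    calc (∫ s in (α - P₀)/ν..(β - P₀)/ν, Real.exp (-H (P₀ + ν * s) / ν ^ 2))
        = ∫ s in (α - P₀)/ν..(β - P₀)/ν, (fun p => Real.exp (-H p / ν ^ 2)) (ν * s + P₀) := by
          apply intervalIntegral.integral_congr
          intro s _
          simp only []
          rw [add_comm P₀ (ν * s)]
      _ = ν⁻¹ • ∫ p in (ν * ((α - P₀)/ν) + P₀)..(ν * ((β - P₀)/ν) + P₀), Real.exp (-H p / ν ^ 2) := by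
          exact intervalIntegral.integral_comp_mul_add (fun p => Real.exp (-H p / ν ^ 2)) (ne_of_gt hν) P₀
      _ = ν⁻¹ * ∫ p in α..β, Real.exp (-H p / ν ^ 2) := by rw [e1, e2, smul_eq_mul]
  exact Filter.Tendsto.congr' heq key
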